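/- In the infinite dihedral group D = ℤ/2 * ℤ/2 (the free product of two copies of the cyclic group of order two, with canonical generators a and b), an element x belongs to the subgroup generated by {aba, bab} if and only if the length of the reduced word representing x is divisible by 3. -/

import Mathlib

/-- `D` is the infinite dihedral group: the free product of two copies of the
cyclic group of order two. -/
abbrev D : Type := Monoid.CoprodI (fun _ : Fin 2 => Multiplicative (ZMod 2))

/-- The first canonical generator `a` of `D`. -/
def genD_a : D :=
  Monoid.CoprodI.of (M := fun _ : Fin 2 => Multiplicative (ZMod 2)) (i := (0 : Fin 2))
    (Multiplicative.ofAdd (1 : ZMod 2))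

/-- The second canonical generator `b` of `D`. -/
def genD_b : D :=
  Monoid.CoprodI.of (M := fun _ : Fin 2 => Multiplicative (ZMod 2)) (i := (1 : Fin 2))
    (Multiplicative.ofAdd (1 : ZMod 2))

namespace Stmt14Aux

open Monoid

/-- The two basic permutations in `S₃`. -/
def gperm : Fin 2 → Equiv.Perm (Fin 3) := fun i =>
  if i = 0 then Equiv.swap 0 1 else Equiv.swap 0 2

/-- The homomorphism `ZMod 2 → S₃` sending the generator to `gperm i`. -/
def psi (i : Fin 2) : Multiplicative (ZMod 2) →* Equiv.Perm (Fin 3) where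
  toFun x := gperm i ^ (Multiplicative.toAdd x).val
  map_one' := by norm_num [ZMod.val_zero]
  map_mul' x y := by
    have key : ∀ u v : ZMod 2, ∀ g : Equiv.Perm (Fin 3), g * g = 1 →
        g ^ (u + v).val = g ^ u.val * g ^ v.val := by
      have hval : ∀ u v : ZMod 2, (u.val + v.val) % 2 = (u + v).val := by decide
      intro u v g hg
      have hsq : g ^ 2 = 1 := by rw [pow_two]; exact hg
      rw [← pow_add, ← hval]
      conv_rhs => rw [← Nat.div_add_mod (u.val + v.val) 2]
      rw [pow_add, pow_mul, hsq, one_pow, one_mul]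
    have hsq : gperm i * gperm i = 1 := by
      fin_cases i <;> simp [gperm, Equiv.swap_mul_self]
    exact key _ _ _ hsq

/-- The homomorphism `φ : D → S₃`. -/
def phi : D →* Equiv.Perm (Fin 3) := Monoid.CoprodI.lift psi

/-- The alternating product `gperm s * gperm (s+1) * ⋯` of length `n`. -/
def pProd (s : Fin 2) : ℕ → Equiv.Perm (Fin 3)
  | 0 => 1
  | n + 1 => gperm s * pProd (s + 1) n

lemma pProd_add_six : ∀ (n : ℕ) (s : Fin 2), pProd s (n + 6) = pProd s n := by
  intro n
  induction n with
  | zero => intro s; fin_cases s <;> decide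
  | succ n ih =>
    intro s
    show gperm s * pProd (s + 1) (n + 6) = gperm s * pProd (s + 1) n
    rw [ih]

lemma pProd_mem : ∀ (n : ℕ) (s : Fin 2),
    (pProd s n = 1 ∨ pProd s n = Equiv.swap 1 2) ↔ 3 ∣ n := by
  intro n
  induction n using Nat.strong_induction_on with
  | _ n ih =>
    rcases lt_or_ge n 6 with h | h
    · interval_cases n <;> intro s <;> fin_cases s <;> decide
    · obtain ⟨m, rfl⟩ : ∃ m, n = m + 6 := ⟨n - 6, by omega⟩
      intro s
      rw [pProd_add_six, ih m (by omega) s]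
      omega

lemma ne_one_eq (x : Multiplicative (ZMod 2)) (h : x ≠ 1) : x = Multiplicative.ofAdd 1 := by
  revert h; revert x; decide

lemma fin2_ne (i j : Fin 2) (h : i ≠ j) : j = i + 1 := by revert h; revert i j; decide

lemma fin2_trans (i j k : Fin 2) (h1 : i ≠ j) (h2 : j ≠ k) : k = i := by
  revert h1 h2; revert i j k; decide

lemma psi_ofAdd_one (i : Fin 2) : psi i (Multiplicative.ofAdd 1) = gperm i := by
  show gperm i ^ (1 : ZMod 2).val = gperm i
  norm_num [ZMod.val_one]

/-- head index of a list of letters -/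
def headIdx : List (Σ _ : Fin 2, Multiplicative (ZMod 2)) → Fin 2
  | [] => 0
  | a :: _ => a.1

lemma list_prod_eq : ∀ (l : List (Σ _ : Fin 2, Multiplicative (ZMod 2))),
    (∀ x ∈ l, x.2 ≠ 1) → l.Chain' (fun a b => a.1 ≠ b.1) →
    (l.map fun le => psi le.1 le.2).prod = pProd (headIdx l) l.length := by
  intro l
  induction l with
  | nil => intro _ _; rfl
  | cons a l ih =>
    intro h1 h2
    have ha : a.2 = Multiplicative.ofAdd 1 := ne_one_eq _ (h1 a (List.mem_cons_self))
    have hrest := ih (fun x hx => h1 x (List.mem_cons_of_mem a hx)) h2.tail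
    simp only [List.map_cons, List.prod_cons, List.length_cons]
    rw [hrest, ha, psi_ofAdd_one]
    show gperm a.1 * pProd (headIdx l) l.length = gperm a.1 * pProd (a.1 + 1) l.length
    cases l with
    | nil => rfl
    | cons b l' =>
      have hab : a.1 ≠ b.1 := (List.isChain_cons_cons.mp h2).1
      have hhead : headIdx (b :: l') = a.1 + 1 := fin2_ne _ _ hab
      rw [hhead]

lemma phi_eq (x : D) :
    phi x = pProd (headIdx (Monoid.CoprodI.Word.equiv x).toList)
      (Monoid.CoprodI.Word.equiv x).toList.length := by
  set w := Monoid.CoprodI.Word.equiv x with hw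
  have hx : x = w.prod := (Monoid.CoprodI.Word.equiv.symm_apply_apply x).symm
  rw [hx]
  show phi (List.prod (w.toList.map fun le => Monoid.CoprodI.of (i := le.1) le.snd)) = _
  rw [map_list_prod, List.map_map]
  have hfun : (⇑phi ∘ fun le : (Σ _ : Fin 2, Multiplicative (ZMod 2)) =>
      Monoid.CoprodI.of (i := le.1) le.snd) = fun le => psi le.1 le.2 := by
    funext le
    exact Monoid.CoprodI.lift_of psi le.2
  rw [hfun]
  exact list_prod_eq w.toList w.ne_one w.chain_ne

lemma phi_genD_a : phi genD_a = Equiv.swap 0 1 := by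
  show phi (Monoid.CoprodI.of _) = _
  rw [phi, Monoid.CoprodI.lift_of, psi_ofAdd_one]
  rfl

lemma phi_genD_b : phi genD_b = Equiv.swap 0 2 := by
  show phi (Monoid.CoprodI.of _) = _
  rw [phi, Monoid.CoprodI.lift_of, psi_ofAdd_one]
  rfl

lemma lemC : ∀ (l : List (Σ _ : Fin 2, Multiplicative (ZMod 2))),
    (∀ x ∈ l, x.2 ≠ 1) → l.Chain' (fun a b => a.1 ≠ b.1) → 3 ∣ l.length →
    (l.map fun le => Monoid.CoprodI.of (i := le.1) le.snd).prod ∈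
      Subgroup.closure ({genD_a * genD_b * genD_a, genD_b * genD_a * genD_b} : Set D)
  | [], _, _, _ => by simpa using one_mem _
  | [_], _, _, h3 => by simp at h3
  | [_, _], _, _, h3 => by simp at h3
  | ⟨i, ma⟩ :: ⟨j, mb⟩ :: ⟨k, mc⟩ :: l, h1, h2, h3 => by
    have hma : ma = Multiplicative.ofAdd 1 :=
      ne_one_eq _ (h1 _ (List.mem_cons_self))
    have hmb : mb = Multiplicative.ofAdd 1 :=
      ne_one_eq _ (h1 _ (List.mem_cons_of_mem _ (List.mem_cons_self)))
    have hmc : mc = Multiplicative.ofAdd 1 :=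
      ne_one_eq _ (h1 _ (List.mem_cons_of_mem _ (List.mem_cons_of_mem _
        (List.mem_cons_self))))
    subst hma hmb hmc
    have hij : i ≠ j := (List.isChain_cons_cons.mp h2).1
    have hjk : j ≠ k := (List.isChain_cons_cons.mp (List.isChain_cons_cons.mp h2).2).1
    have hrec := lemC l
      (fun x hx => h1 x (List.mem_cons_of_mem _ (List.mem_cons_of_mem _
        (List.mem_cons_of_mem _ hx))))
      ((List.isChain_cons_cons.mp (List.isChain_cons_cons.mp h2).2).2.tail)
      (by simp only [List.length_cons] at h3 ⊢; omega)
    have hj : j = i + 1 := fin2_ne _ _ hij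
    have hk : k = i := fin2_trans i j k hij hjk
    subst hj hk
    simp only [List.map_cons, List.prod_cons, ← mul_assoc]
    apply mul_mem _ hrec
    have hmem : Monoid.CoprodI.of (M := fun _ : Fin 2 => Multiplicative (ZMod 2)) (i := k)
          (Multiplicative.ofAdd 1) *
        Monoid.CoprodI.of (i := k + 1) (Multiplicative.ofAdd 1) *
        Monoid.CoprodI.of (i := k) (Multiplicative.ofAdd 1) ∈
        ({genD_a * genD_b * genD_a, genD_b * genD_a * genD_b} : Set D) := by
      fin_cases k
      · left; rfl
      · right; rfl
    exact Subgroup.subset_closure hmem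

end Stmt14Aux

theorem stmt14 (x : D) :
    x ∈ Subgroup.closure
        ({genD_a * genD_b * genD_a, genD_b * genD_a * genD_b} : Set D) ↔
      3 ∣ (Monoid.CoprodI.Word.equiv x).toList.length := by
  open Stmt14Aux in
  constructor
  · intro hx
    have hQ : phi x = 1 ∨ phi x = Equiv.swap 1 2 := by
      refine Subgroup.closure_induction ?_ ?_ ?_ ?_ hx
      · rintro g (rfl | rfl) <;>
          · right
            simp only [map_mul, phi_genD_a, phi_genD_b]
            decide
      · left; exact map_one phi
      · rintro a b _ _ (ha | ha) (hb | hb)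
        · left; rw [map_mul, ha, hb, one_mul]
        · right; rw [map_mul, ha, hb, one_mul]
        · right; rw [map_mul, ha, hb, mul_one]
        · left; rw [map_mul, ha, hb, Equiv.swap_mul_self]
      · rintro a _ (ha | ha)
        · left; rw [map_inv, ha, inv_one]
        · right; rw [map_inv, ha, Equiv.swap_inv]
    rw [phi_eq] at hQ
    exact (pProd_mem _ _).mp hQ
  · intro h
    have hmem := lemC (Monoid.CoprodI.Word.equiv x).toList
      (Monoid.CoprodI.Word.equiv x).ne_one (Monoid.CoprodI.Word.equiv x).chain_ne h
    have hx : x = (Monoid.CoprodI.Word.equiv x).prod :=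
      (Monoid.CoprodI.Word.equiv.symm_apply_apply x).symm
    rw [hx]
    exact hmem
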